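/- Let p ∈ (1/2, 1). Then the function f ↦ (p·ln(1+f) + (1−p)·ln(1−f)) / (√(p(1−p))·(ln(1+f) − ln(1−f))) is strictly decreasing on (0,1). -/

import Mathlib

open Real

/-- Key inequality: for `x ∈ (0,1)`, `(1-x)(-log(1-x)) < (1+x) log(1+x)`. -/
lemma key_ineq {x : ℝ} (hx : x ∈ Set.Ioo (0:ℝ) 1) :
    (1 - x) * (-Real.log (1 - x)) < (1 + x) * Real.log (1 + x) := by
  obtain ⟨hx0, hx1⟩ := hx
  have h := Real.strictConvexOn_mul_log.2 (x := 1 - x) (y := 1 + x)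
    (by simp; linarith) (by simp; linarith) (by intro h; linarith [h]) 
    (by norm_num : (0:ℝ) < 1/2) (by norm_num : (0:ℝ) < 1/2) (by norm_num)
  simp only [smul_eq_mul] at h
  have h1 : (1/2 : ℝ) * (1 - x) + (1/2) * (1 + x) = 1 := by ring
  rw [h1] at h
  simp only [Real.log_one, mul_zero, one_mul] at h
  nlinarith [h]

/-- The ratio `u(f) = log(1+f) / (-log(1-f))` is strictly decreasing on `(0,1)`. -/
lemma u_strictAnti :
    StrictAntiOn (fun f : ℝ => Real.log (1 + f) / (-Real.log (1 - f)))
      (Set.Ioo (0:ℝ) 1) := by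
  apply strictAntiOn_of_deriv_neg (convex_Ioo 0 1)
  · apply ContinuousOn.div
    · apply ContinuousOn.log
      · exact (continuous_const.add continuous_id).continuousOn
      · intro x hx; obtain ⟨hx0, hx1⟩ := hx; positivity
    · apply ContinuousOn.neg
      apply ContinuousOn.log
      · exact (continuous_const.sub continuous_id).continuousOn
      · intro x hx; obtain ⟨hx0, hx1⟩ := hx
        have : (0:ℝ) < 1 - x := by linarith
        linarith [this]
    · intro x hx
      obtain ⟨hx0, hx1⟩ := hx
      have hlt : Real.log (1 - x) < 0 := Real.log_neg (by linarith) (by linarith)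
      linarith
  · intro x hx
    rw [interior_Ioo] at hx
    obtain ⟨hx0, hx1⟩ := hx
    have h1p : (0:ℝ) < 1 + x := by linarith
    have h1m : (0:ℝ) < 1 - x := by linarith
    have hA : Real.log (1 + x) > 0 := Real.log_pos (by linarith)
    have hB : Real.log (1 - x) < 0 := Real.log_neg h1m (by linarith)
    have hd1 : HasDerivAt (fun f : ℝ => Real.log (1 + f)) (1 / (1 + x)) x := by
      have := ((hasDerivAt_id x).const_add 1).log (ne_of_gt h1p)
      simpa using this
    have hd2 : HasDerivAt (fun f : ℝ => -Real.log (1 - f)) (1 / (1 - x)) x := by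
      have := (((hasDerivAt_id x).const_sub 1).log (ne_of_gt h1m)).neg
      simpa [neg_div, neg_neg, Pi.neg_def] using this
    have hne : -Real.log (1 - x) ≠ 0 := by linarith
    have hd := hd1.div hd2 hne
    rw [show (fun f : ℝ => Real.log (1 + f) / -Real.log (1 - f)) = ((fun f : ℝ => Real.log (1 + f)) / fun f : ℝ => -Real.log (1 - f)) from rfl, hd.deriv]
    apply div_neg_of_neg_of_pos
    · have := key_ineq ⟨hx0, hx1⟩
      have h : 1 / (1 + x) * -Real.log (1 - x) < Real.log (1 + x) * (1 / (1 - x)) := by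
        rw [div_mul_eq_mul_div, one_mul, mul_one_div, div_lt_div_iff₀ h1p h1m]
        nlinarith
      linarith
    · positivity

theorem bernoulli_sharpe_ratio_strictAnti
    (p : ℝ) (hp : p ∈ Set.Ioo (1 / 2 : ℝ) 1) :
    StrictAntiOn
      (fun f => (p * Real.log (1 + f) + (1 - p) * Real.log (1 - f))
        / (Real.sqrt (p * (1 - p)) * (Real.log (1 + f) - Real.log (1 - f))))
      (Set.Ioo (0 : ℝ) 1) := by
  obtain ⟨hp1, hp2⟩ := hp
  have hc : 0 < Real.sqrt (p * (1 - p)) := by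
    apply Real.sqrt_pos.mpr
    nlinarith
  intro a ha b hb hab
  obtain ⟨ha0, ha1⟩ := ha
  obtain ⟨hb0, hb1⟩ := hb
  set Aa := Real.log (1 + a) with hAa
  set Ab := Real.log (1 + b) with hAb
  set Ba := Real.log (1 - a) with hBa
  set Bb := Real.log (1 - b) with hBb
  have hAa0 : 0 < Aa := Real.log_pos (by linarith)
  have hAb0 : 0 < Ab := Real.log_pos (by linarith)
  have hBa0 : Ba < 0 := Real.log_neg (by linarith) (by linarith)
  have hBb0 : Bb < 0 := Real.log_neg (by linarith) (by linarith)
  have hu := u_strictAnti ⟨ha0, ha1⟩ ⟨hb0, hb1⟩ hab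
  simp only at hu
  rw [div_lt_div_iff₀ (by linarith) (by linarith)] at hu
  -- hu : Ab * (-Ba) < Aa * (-Bb)
  have hDa : 0 < Aa - Ba := by linarith
  have hDb : 0 < Ab - Bb := by linarith
  rw [div_lt_div_iff₀ (by positivity) (by positivity)]
  nlinarith [mul_pos hc (show (0:ℝ) < Aa * (-Bb) - Ab * (-Ba) by linarith)]
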